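/- Let r ≥ 1 and let (v_1,…,v_r) be a system of linear functionals on ℂ[x] such that for every 0 ≤ j ≤ r the moment matrix M^{[j]} of V^{[j]} := (v_{j+1},…,v_r, x·v_1,…,x·v_j) admits a Gauss–Borel factorisation, and let (α_n) be as in the bidiagonal factorisation theorem. For 0 ≤ j ≤ r and m ≥ 1 let Δ^{[j]}_m denote the determinant of the m×m leading principal submatrix of M^{[j]} (Δ^{[j]}_0 := 1), and let Δ̃^{[j]}_m denote the determinant of the m×m matrix formed by rows 0,…,m−2, m and columns 0,…,m−1 of M^{[j]}. Then for all n ∈ ℕ: α_{(r+1)n} = (Δ^{[r]}_{n+1} Δ^{[0]}_n)/(Δ^{[r]}_n Δ^{[0]}_{n+1}) = Δ̃^{[0]}_{n+1}/Δ^{[0]}_{n+1} − Δ̃^{[r]}_n/Δ^{[r]}_n, and for 1 ≤ i ≤ r: α_{(r+1)n+i} = (Δ^{[i−1]}_{n+2} Δ^{[i]}_n)/(Δ^{[i−1]}_{n+1} Δ^{[i]}_{n+1}) = Δ̃^{[i]}_{n+1}/Δ^{[i]}_{n+1} − Δ̃^{[i−1]}_{n+1}/Δ^{[i−1]}_{n+1}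 (with the convention Δ̃^{[r]}_0 := 0). -/

import Mathlib

open Polynomial Finset

noncomputable section

/-- A linear functional on `ℂ[x]`. -/
abbrev LF := Polynomial ℂ →ₗ[ℂ] ℂ

/-- `x·u` is the functional `p ↦ ⟨u, x p⟩`. -/
def xMul (u : LF) : LF := u.comp (LinearMap.mulLeft ℂ (Polynomial.X : Polynomial ℂ))

/-- The moment matrix of a system of `r` linear functionals (0-indexed). -/
def momentMatrix (r : ℕ) (v : ℕ → LF) (n ℓ : ℕ) : ℂ :=
  v (ℓ % r) (Polynomial.X ^ (ℓ / r + n))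

/-- The Darboux-transformed system `V^{[j]} = (v_{j+1},…,v_r, x·v_1,…,x·v_j)`. -/
def Vsys (r j : ℕ) (v : ℕ → LF) : ℕ → LF :=
  fun i => if j + i < r then v (j + i) else xMul (v (j + i - r))

/-- A Gauss–Borel factorisation `M = A·B` of the moment matrix. -/
structure GaussBorel (r : ℕ) (v : ℕ → LF) (A B : ℕ → ℕ → ℂ) : Prop where
  A_diag : ∀ n, A n n = 1
  A_upper : ∀ n ℓ, n < ℓ → A n ℓ = 0
  B_lower : ∀ n ℓ, ℓ < n → B n ℓ = 0
  B_diag : ∀ n, B n n ≠ 0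
  factor : ∀ n ℓ, momentMatrix r v n ℓ = ∑ k ∈ Finset.range (n + 1), A n k * B k ℓ

/-- The coefficients `α_{(r+1)n} = B^{[r]}_{n,n}/B^{[0]}_{n,n}` and
`α_{(r+1)n+i} = B^{[i-1]}_{n+1,n+1}/B^{[i]}_{n,n}` for `1 ≤ i ≤ r`. -/
def alphaGB (r : ℕ) (B : ℕ → ℕ → ℕ → ℂ) (m : ℕ) : ℂ :=
  if m % (r + 1) = 0 then
    B r (m / (r + 1)) (m / (r + 1)) / B 0 (m / (r + 1)) (m / (r + 1))
  else
    B (m % (r + 1) - 1) (m / (r + 1) + 1) (m / (r + 1) + 1)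
      / B (m % (r + 1)) (m / (r + 1)) (m / (r + 1))

/-- `Δ_m`: determinant of the `m × m` leading principal submatrix of the
moment matrix of `v` (`Δ_0 = 1`). -/
def Delta (r : ℕ) (v : ℕ → LF) (m : ℕ) : ℂ :=
  Matrix.det (Matrix.of fun i j : Fin m => momentMatrix r v i j)

/-- `Δ̃_m`: determinant of the `m × m` matrix formed by rows `0,…,m−2, m` and
columns `0,…,m−1` of the moment matrix of `v` (with `Δ̃_0 := 0`). -/
def DeltaT (r : ℕ) (v : ℕ → LF) (m : ℕ) : ℂ :=
  if m = 0 then 0 else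
    Matrix.det (Matrix.of fun i j : Fin m =>
      momentMatrix r v (if (i : ℕ) = m - 1 then m else (i : ℕ)) j)


namespace Stmt6Aux

lemma row_shift_key
    (A1 B1 A2 B2 : ℕ → ℕ → ℂ)
    (hA1u : ∀ n ℓ, n < ℓ → A1 n ℓ = 0) (hA1d : ∀ n, A1 n n = 1)
    (hB1l : ∀ n ℓ, ℓ < n → B1 n ℓ = 0) (hB1d : ∀ n, B1 n n ≠ 0)
    (hA2u : ∀ n ℓ, n < ℓ → A2 n ℓ = 0) (hA2d : ∀ n, A2 n n = 1)
    (hB2l : ∀ n ℓ, ℓ < n → B2 n ℓ = 0) (hB2d : ∀ n, B2 n n ≠ 0)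
    (H : ∀ n ℓ, ∑ k ∈ Finset.range (n + 2), A1 (n+1) k * B1 k ℓ
              = ∑ k ∈ Finset.range (n + 1), A2 n k * B2 k ℓ) :
    ∀ n, B2 n n / B1 n n = A1 (n+1) n - (if n = 0 then 0 else A2 n (n-1)) := by
  have main : ∀ n, (∀ ℓ, B2 n ℓ = (B2 n n / B1 n n) * B1 n ℓ + B1 (n+1) ℓ) ∧
      (∀ m, A1 (m+1) n = A2 m n * (B2 n n / B1 n n)
          + (if n = 0 then 0 else A2 m (n-1))) := by
    intro n
    induction n using Nat.strong_induction_on with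
    | _ n IH =>
    -- Step A
    have hPc : ∀ ℓ, B2 n ℓ =
        (A1 (n+1) n - (if n = 0 then 0 else A2 n (n-1))) * B1 n ℓ + B1 (n+1) ℓ := by
      intro ℓ
      have h1 := H n ℓ
      rw [show n + 2 = (n+1) + 1 from rfl, Finset.sum_range_succ, Finset.sum_range_succ,
        Finset.sum_range_succ, hA1d, hA2d] at h1
      have key : (∑ k ∈ Finset.range n, A1 (n+1) k * B1 k ℓ)
          - (∑ k ∈ Finset.range n, A2 n k * B2 k ℓ)
          = - (if n = 0 then 0 else A2 n (n-1) * B1 n ℓ) := by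
        rw [← Finset.sum_sub_distrib]
        have hcg : ∀ k ∈ Finset.range n,
            A1 (n+1) k * B1 k ℓ - A2 n k * B2 k ℓ
            = (fun k => if k = 0 then 0 else A2 n (k-1) * B1 k ℓ) k
              - (fun k => if k = 0 then 0 else A2 n (k-1) * B1 k ℓ) (k+1) := by
          intro k hk
          have hk' : k < n := Finset.mem_range.mp hk
          obtain ⟨hPk, hQk⟩ := IH k hk'
          simp only
          rw [hPk ℓ, hQk n, if_neg (Nat.succ_ne_zero k), Nat.add_sub_cancel]
          by_cases hk0 : k = 0 <;> simp [hk0] <;> ring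
        rw [Finset.sum_congr rfl hcg, Finset.sum_range_sub']
        simp
      have hIte : (if n = 0 then 0 else A2 n (n-1)) * B1 n ℓ
          = (if n = 0 then 0 else A2 n (n-1) * B1 n ℓ) := by
        split <;> simp
      linear_combination key - h1 + hIte
    -- Step B
    have hc : B2 n n / B1 n n = A1 (n+1) n - (if n = 0 then 0 else A2 n (n-1)) := by
      have h := hPc n
      rw [hB1l (n+1) n (Nat.lt_succ_self n), add_zero] at h
      rw [div_eq_iff (hB1d n)]
      linear_combination h
    have hP : ∀ ℓ, B2 n ℓ = (B2 n n / B1 n n) * B1 n ℓ + B1 (n+1) ℓ := by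
      intro ℓ; rw [hc]; exact hPc ℓ
    refine ⟨hP, ?_⟩
    -- Step C
    intro m
    rcases lt_or_ge m n with hm | hm
    · rcases Nat.lt_or_ge (m+1) n with h2 | h2
      · rw [hA1u _ _ h2, hA2u _ _ hm, if_neg (by omega), hA2u _ _ (by omega)]
        ring
      · have hmn : n = m + 1 := by omega
        subst hmn
        rw [hA1d, hA2u m (m+1) (Nat.lt_succ_self m), if_neg (Nat.succ_ne_zero m),
          Nat.add_sub_cancel, hA2d]
        ring
    · have h1 := H m n
      have hL : ∑ k ∈ Finset.range (m+2), A1 (m+1) k * B1 k n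
          = ∑ k ∈ Finset.range (n+1), A1 (m+1) k * B1 k n := by
        symm
        apply Finset.sum_subset
        · intro x hx; simp only [Finset.mem_range] at hx ⊢; omega
        · intro x hx hx'; simp only [Finset.mem_range] at hx hx'
          rw [hB1l x n (by omega), mul_zero]
      have hR : ∑ k ∈ Finset.range (m+1), A2 m k * B2 k n
          = ∑ k ∈ Finset.range (n+1), A2 m k * B2 k n := by
        symm
        apply Finset.sum_subset
        · intro x hx; simp only [Finset.mem_range] at hx ⊢; omega
        · intro x hx hx'; simp only [Finset.mem_range] at hx hx'
          rw [hB2l x n (by omega), mul_zero]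
      rw [hL, hR] at h1
      have hPall : ∀ k, k ≤ n → ∀ ℓ', B2 k ℓ' = (B2 k k / B1 k k) * B1 k ℓ' + B1 (k+1) ℓ' := by
        intro k hk
        rcases eq_or_lt_of_le hk with rfl | h
        · exact hP
        · exact (IH k h).1
      have key2 : (∑ k ∈ Finset.range n, A1 (m+1) k * B1 k n)
          - (∑ k ∈ Finset.range n, A2 m k * B2 k n)
          = - (if n = 0 then 0 else A2 m (n-1) * B1 n n) := by
        rw [← Finset.sum_sub_distrib]
        have hcg : ∀ k ∈ Finset.range n,
            A1 (m+1) k * B1 k n - A2 m k * B2 k n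
            = (fun k => if k = 0 then 0 else A2 m (k-1) * B1 k n) k
              - (fun k => if k = 0 then 0 else A2 m (k-1) * B1 k n) (k+1) := by
          intro k hk
          have hk' : k < n := Finset.mem_range.mp hk
          obtain ⟨hPk, hQk⟩ := IH k hk'
          simp only
          rw [hPk n, hQk m, if_neg (Nat.succ_ne_zero k), Nat.add_sub_cancel]
          by_cases hk0 : k = 0 <;> simp [hk0] <;> ring
        rw [Finset.sum_congr rfl hcg, Finset.sum_range_sub']
        simp
      rw [Finset.sum_range_succ, Finset.sum_range_succ] at h1
      rw [hPall n le_rfl n, hB1l (n+1) n (Nat.lt_succ_self n)] at h1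
      have hIte2 : (if n = 0 then 0 else A2 m (n-1)) * B1 n n
          = (if n = 0 then 0 else A2 m (n-1) * B1 n n) := by
        split <;> simp
      have goal' : A1 (m+1) n * B1 n n
          = (A2 m n * (B2 n n / B1 n n) + (if n = 0 then 0 else A2 m (n-1))) * B1 n n := by
        rw [add_mul, hIte2]
        linear_combination h1 - key2
      exact mul_right_cancel₀ (hB1d n) goal'
  intro n
  have h := (main n).2 n
  rw [hA2d] at h
  linear_combination -h


lemma col_shift_key
    (A1 B1 A2 B2 : ℕ → ℕ → ℂ)
    (hA1u : ∀ n ℓ, n < ℓ → A1 n ℓ = 0) (hA1d : ∀ n, A1 n n = 1)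
    (hB1l : ∀ n ℓ, ℓ < n → B1 n ℓ = 0) (hB1d : ∀ n, B1 n n ≠ 0)
    (hA2u : ∀ n ℓ, n < ℓ → A2 n ℓ = 0) (hA2d : ∀ n, A2 n n = 1)
    (hB2l : ∀ n ℓ, ℓ < n → B2 n ℓ = 0) (hB2d : ∀ n, B2 n n ≠ 0)
    (H : ∀ n ℓ, ∑ k ∈ Finset.range (n + 1), A2 n k * B2 k ℓ
              = ∑ k ∈ Finset.range (n + 1), A1 n k * B1 k (ℓ+1)) :
    ∀ n, B1 (n+1) (n+1) / B2 n n = A2 (n+1) n - A1 (n+1) n := by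
  have main : ∀ n,
      (∀ ℓ, B1 n (ℓ+1) = B2 n ℓ
          + (if n = 0 then 0 else (B1 n n / B2 (n-1) (n-1)) * B2 (n-1) ℓ)) ∧
      (∀ m n', n = n' + 1 →
          A2 m n' = A1 m n' + A1 m (n'+1) * (B1 (n'+1) (n'+1) / B2 n' n')) := by
    intro n
    induction n using Nat.strong_induction_on with
    | _ n IH =>
    -- Step A : Q2 with coefficient in A-form
    have hQc : ∀ ℓ, B1 n (ℓ+1) = B2 n ℓ
        + (if n = 0 then 0 else (A2 n (n-1) - A1 n (n-1)) * B2 (n-1) ℓ) := by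
      intro ℓ
      have h1 := H n ℓ
      rw [Finset.sum_range_succ, Finset.sum_range_succ, hA1d, hA2d] at h1
      have key : (∑ k ∈ Finset.range n, A2 n k * B2 k ℓ)
          - (∑ k ∈ Finset.range n, A1 n k * B1 k (ℓ+1))
          = (if n = 0 then 0 else (A2 n (n-1) - A1 n (n-1)) * B2 (n-1) ℓ) := by
        rw [← Finset.sum_sub_distrib]
        have hcg : ∀ k ∈ Finset.range n,
            A2 n k * B2 k ℓ - A1 n k * B1 k (ℓ+1)
            = (fun k => if k = 0 then 0 else (A2 n (k-1) - A1 n (k-1)) * B2 (k-1) ℓ) (k+1)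
              - (fun k => if k = 0 then 0 else (A2 n (k-1) - A1 n (k-1)) * B2 (k-1) ℓ) k := by
          intro k hk
          have hk' : k < n := Finset.mem_range.mp hk
          obtain ⟨hQk, hPk⟩ := IH k hk'
          simp only
          rw [hQk ℓ, if_neg (Nat.succ_ne_zero k), Nat.add_sub_cancel]
          rcases k with _ | j
          · simp; ring
          · have e := hPk n j rfl
            simp only [Nat.add_sub_cancel, if_neg (Nat.succ_ne_zero j)]
            linear_combination (B2 j ℓ) * e
        rw [Finset.sum_congr rfl hcg,
          Finset.sum_range_sub (fun k => if k = 0 then 0 else (A2 n (k-1) - A1 n (k-1)) * B2 (k-1) ℓ)]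
        simp
      linear_combination key - h1
    -- Step B : coefficient identity
    have hco : ∀ j, n = j + 1 → A2 n j - A1 n j = B1 n n / B2 j j := by
      intro j hj
      have h := hQc j
      rw [hj] at h ⊢
      rw [if_neg (Nat.succ_ne_zero j), Nat.add_sub_cancel, hB2l (j+1) j (Nat.lt_succ_self j)] at h
      rw [eq_comm, div_eq_iff (hB2d j)]
      linear_combination h
    -- Step A' : Q2 in final form
    have hQ : ∀ ℓ, B1 n (ℓ+1) = B2 n ℓ
        + (if n = 0 then 0 else (B1 n n / B2 (n-1) (n-1)) * B2 (n-1) ℓ) := by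
      intro ℓ
      rcases n with _ | j
      · simpa using hQc ℓ
      · have h := hQc ℓ
        simp only [Nat.add_sub_cancel, if_neg (Nat.succ_ne_zero j)] at h ⊢
        rw [hco j rfl] at h
        exact h
    refine ⟨hQ, ?_⟩
    -- Step C : P2
    intro m n' hn'
    subst hn'
    rcases Nat.lt_or_ge m (n'+1) with hm | hm
    · rcases Nat.lt_or_ge m n' with h2 | h2
      · rw [hA2u _ _ h2, hA1u _ _ h2, hA1u _ _ (by omega)]
        ring
      · have hmn : m = n' := by omega
        subst hmn
        rw [hA2d, hA1d, hA1u _ _ (Nat.lt_succ_self m)]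
        ring
    · rcases Nat.eq_or_lt_of_le hm with hm1 | hm1
      · -- m = n' + 1
        subst hm1
        have h := hco n' rfl
        rw [hA1d]
        linear_combination h
      · -- m > n' + 1
        have h1 := H m n'
        have hL : ∑ k ∈ Finset.range (m+1), A2 m k * B2 k n'
            = ∑ k ∈ Finset.range (n'+2), A2 m k * B2 k n' := by
          symm
          apply Finset.sum_subset
          · intro x hx; simp only [Finset.mem_range] at hx ⊢; omega
          · intro x hx hx'; simp only [Finset.mem_range] at hx hx'
            rw [hB2l x n' (by omega), mul_zero]
        have hR : ∑ k ∈ Finset.range (m+1), A1 m k * B1 k (n'+1)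
            = ∑ k ∈ Finset.range (n'+2), A1 m k * B1 k (n'+1) := by
          symm
          apply Finset.sum_subset
          · intro x hx; simp only [Finset.mem_range] at hx ⊢; omega
          · intro x hx hx'; simp only [Finset.mem_range] at hx hx'
            rw [hB1l x (n'+1) (by omega), mul_zero]
        rw [hL, hR, Finset.sum_range_succ (fun k => A2 m k * B2 k n') (n'+1),
          Finset.sum_range_succ (fun k => A1 m k * B1 k (n'+1)) (n'+1)] at h1
        have key2 : (∑ k ∈ Finset.range (n'+1), A2 m k * B2 k n')
            - (∑ k ∈ Finset.range (n'+1), A1 m k * B1 k (n'+1))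
            = (A2 m n' - A1 m n') * B2 n' n' := by
          rw [← Finset.sum_sub_distrib]
          have hcg : ∀ k ∈ Finset.range (n'+1),
              A2 m k * B2 k n' - A1 m k * B1 k (n'+1)
              = (fun k => if k = 0 then 0 else (A2 m (k-1) - A1 m (k-1)) * B2 (k-1) n') (k+1)
                - (fun k => if k = 0 then 0 else (A2 m (k-1) - A1 m (k-1)) * B2 (k-1) n') k := by
            intro k hk
            have hk' : k < n' + 1 := Finset.mem_range.mp hk
            obtain ⟨hQk, hPk⟩ := IH k hk'
            simp only
            rw [hQk n', if_neg (Nat.succ_ne_zero k), Nat.add_sub_cancel]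
            rcases k with _ | j
            · simp; ring
            · have e := hPk m j rfl
              simp only [Nat.add_sub_cancel, if_neg (Nat.succ_ne_zero j)]
              linear_combination (B2 j n') * e
          rw [Finset.sum_congr rfl hcg,
            Finset.sum_range_sub (fun k => if k = 0 then 0 else (A2 m (k-1) - A1 m (k-1)) * B2 (k-1) n')]
          simp
        rw [hB2l (n'+1) n' (Nat.lt_succ_self n')] at h1
        have hx : A1 m (n'+1) * (B1 (n'+1) (n'+1) / B2 n' n') * B2 n' n'
            = A1 m (n'+1) * B1 (n'+1) (n'+1) := by
          rw [mul_assoc, div_mul_cancel₀ _ (hB2d n')]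
        have goal' : A2 m n' * B2 n' n'
            = (A1 m n' + A1 m (n'+1) * (B1 (n'+1) (n'+1) / B2 n' n')) * B2 n' n' := by
          rw [add_mul, hx]
          linear_combination h1 - key2
        exact mul_right_cancel₀ (hB2d n') goal'
  intro n
  have h := (main (n+1)).2 (n+1) n rfl
  rw [hA1d] at h
  linear_combination -h


lemma delta_eq_prod {r : ℕ} {v : ℕ → LF} {A B : ℕ → ℕ → ℂ}
    (h : GaussBorel r v A B) (m : ℕ) :
    Delta r v m = ∏ k ∈ Finset.range m, B k k := by
  unfold Delta
  have hfac : (Matrix.of fun i j : Fin m => momentMatrix r v i j)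
      = (Matrix.of fun i j : Fin m => A i j) * (Matrix.of fun i j : Fin m => B i j) := by
    ext i j
    simp only [Matrix.of_apply, Matrix.mul_apply]
    rw [h.factor i j]
    rw [Fin.sum_univ_eq_sum_range (fun k => A i k * B k j) m]
    apply Finset.sum_subset
    · intro x hx; simp only [Finset.mem_range] at hx ⊢; omega
    · intro x hx hx'; simp only [Finset.mem_range] at hx hx'
      rw [h.A_upper i x (by omega), zero_mul]
  rw [hfac, Matrix.det_mul]
  have hAT : (Matrix.of fun i j : Fin m => A i j).BlockTriangular OrderDual.toDual := by
    intro i j hij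
    have hij' : (i : ℕ) < (j : ℕ) := hij
    exact h.A_upper i j hij'
  have hBT : (Matrix.of fun i j : Fin m => B i j).BlockTriangular id := by
    intro i j hij
    have hij' : (j : ℕ) < (i : ℕ) := hij
    exact h.B_lower i j hij'
  have hdA : Matrix.det (Matrix.of fun i j : Fin m => A i j) = 1 := by
    rw [Matrix.det_of_lowerTriangular _ hAT]
    simp [h.A_diag]
  have hdB : Matrix.det (Matrix.of fun i j : Fin m => B i j)
      = ∏ k ∈ Finset.range m, B k k := by
    rw [Matrix.det_of_upperTriangular hBT]
    simp only [Matrix.of_apply]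
    exact Fin.prod_univ_eq_prod_range (fun k => B k k) m
  rw [hdA, hdB, one_mul]


lemma deltaT_eq {r : ℕ} {v : ℕ → LF} {A B : ℕ → ℕ → ℂ}
    (h : GaussBorel r v A B) (m : ℕ) (hm : 1 ≤ m) :
    DeltaT r v m = A m (m-1) * ∏ k ∈ Finset.range m, B k k := by
  unfold DeltaT
  rw [if_neg (by omega)]
  have hfac : (Matrix.of fun i j : Fin m =>
        momentMatrix r v (if (i : ℕ) = m - 1 then m else (i : ℕ)) j)
      = (Matrix.of fun i j : Fin m => A (if (i : ℕ) = m - 1 then m else (i : ℕ)) j)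
        * (Matrix.of fun i j : Fin m => B i j) := by
    ext i j
    simp only [Matrix.of_apply, Matrix.mul_apply]
    set ρ : ℕ := if (i : ℕ) = m - 1 then m else (i : ℕ) with hρ
    rw [h.factor ρ j]
    rw [Fin.sum_univ_eq_sum_range (fun k => A ρ k * B k j) m]
    rcases Nat.lt_or_ge ρ m with hlt | hge
    · apply Finset.sum_subset
      · intro x hx; simp only [Finset.mem_range] at hx ⊢; omega
      · intro x hx hx'; simp only [Finset.mem_range] at hx hx'
        rw [h.A_upper ρ x (by omega), zero_mul]
    · symm
      apply Finset.sum_subset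
      · intro x hx; simp only [Finset.mem_range] at hx ⊢; omega
      · intro x hx hx'; simp only [Finset.mem_range] at hx hx'
        rw [h.B_lower x j (by omega), mul_zero]
  rw [hfac, Matrix.det_mul]
  have hAT : (Matrix.of fun i j : Fin m =>
      A (if (i : ℕ) = m - 1 then m else (i : ℕ)) j).BlockTriangular OrderDual.toDual := by
    intro i j hij
    have hij' : (i : ℕ) < (j : ℕ) := hij
    have hj : (j : ℕ) < m := j.isLt
    simp only [Matrix.of_apply]
    split
    · exact absurd hij' (by omega)
    · exact h.A_upper _ _ hij'
  have hBT : (Matrix.of fun i j : Fin m => B i j).BlockTriangular id := by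
    intro i j hij
    have hij' : (j : ℕ) < (i : ℕ) := hij
    exact h.B_lower i j hij'
  have hdA : Matrix.det (Matrix.of fun i j : Fin m =>
      A (if (i : ℕ) = m - 1 then m else (i : ℕ)) j) = A m (m-1) := by
    rw [Matrix.det_of_lowerTriangular _ hAT]
    simp only [Matrix.of_apply]
    rw [Fin.prod_univ_eq_prod_range
      (fun k => A (if k = m - 1 then m else k) k) m]
    obtain ⟨t, rfl⟩ : ∃ t, m = t + 1 := ⟨m - 1, by omega⟩
    rw [Finset.prod_range_succ, if_pos (by omega)]
    rw [Finset.prod_eq_one, one_mul, Nat.add_sub_cancel]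
    intro k hk
    simp only [Finset.mem_range] at hk
    rw [if_neg (by omega), h.A_diag]
  have hdB : Matrix.det (Matrix.of fun i j : Fin m => B i j)
      = ∏ k ∈ Finset.range m, B k k := by
    rw [Matrix.det_of_upperTriangular hBT]
    simp only [Matrix.of_apply]
    exact Fin.prod_univ_eq_prod_range (fun k => B k k) m
  rw [hdA, hdB]


lemma xMul_pow (u : LF) (k : ℕ) : xMul u (Polynomial.X ^ k) = u (Polynomial.X ^ (k+1)) := by
  simp only [xMul, LinearMap.comp_apply, LinearMap.mulLeft_apply]
  rw [← pow_succ']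

lemma shift_row (r : ℕ) (hr : 1 ≤ r) (v : ℕ → LF) (n ℓ : ℕ) :
    momentMatrix r (Vsys r r v) n ℓ = momentMatrix r (Vsys r 0 v) (n+1) ℓ := by
  have hlt : ℓ % r < r := Nat.mod_lt _ (by omega)
  simp only [momentMatrix, Vsys]
  rw [if_neg (by omega), if_pos (by omega)]
  rw [show r + ℓ % r - r = ℓ % r from by omega, show 0 + ℓ % r = ℓ % r from by omega]
  rw [xMul_pow, show ℓ / r + n + 1 = ℓ / r + (n + 1) from by omega]


lemma shift_col (r : ℕ) (hr : 1 ≤ r) (v : ℕ → LF) (i : ℕ) (hi1 : 1 ≤ i) (hi2 : i ≤ r)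
    (n ℓ : ℕ) :
    momentMatrix r (Vsys r i v) n ℓ = momentMatrix r (Vsys r (i-1) v) n (ℓ+1) := by
  have hlt : ℓ % r < r := Nat.mod_lt _ (by omega)
  have hdm : ℓ / r * r + ℓ % r = ℓ := Nat.div_add_mod' ℓ r
  rcases Nat.lt_or_ge (ℓ % r + 1) r with hc | hc
  · -- ℓ % r + 1 < r
    have e0 : ℓ + 1 = (ℓ % r + 1) + (ℓ / r) * r := by omega
    have e1 : (ℓ + 1) % r = ℓ % r + 1 := by
      rw [e0, Nat.add_mul_mod_self_right, Nat.mod_eq_of_lt hc]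
    have e2 : (ℓ + 1) / r = ℓ / r := by
      rw [e0, Nat.add_mul_div_right _ _ (by omega : 0 < r), Nat.div_eq_of_lt hc, zero_add]
    simp only [momentMatrix, e1, e2, Vsys]
    rw [show i - 1 + (ℓ % r + 1) = i + ℓ % r from by omega]
  · -- ℓ % r = r - 1
    have hc' : ℓ % r + 1 = r := by omega
    have hx : (ℓ / r + 1) * r = ℓ / r * r + r := by ring
    have e0 : ℓ + 1 = 0 + (ℓ / r + 1) * r := by omega
    have e1 : (ℓ + 1) % r = 0 := by
      rw [e0, Nat.add_mul_mod_self_right, Nat.zero_mod]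
    have e2 : (ℓ + 1) / r = ℓ / r + 1 := by
      rw [e0, Nat.add_mul_div_right _ _ (by omega : 0 < r), Nat.div_eq_of_lt (by omega), zero_add]
    simp only [momentMatrix, e1, e2, Vsys]
    rw [if_neg (by omega), if_pos (by omega)]
    rw [show i + ℓ % r - r = i - 1 + 0 from by omega]
    rw [xMul_pow, show ℓ / r + n + 1 = ℓ / r + 1 + n from by omega]


end Stmt6Aux

theorem stmt6 (r : ℕ) (hr : 1 ≤ r) (v : ℕ → LF) (A B : ℕ → ℕ → ℕ → ℂ)
    (hGB : ∀ j, j ≤ r → GaussBorel r (Vsys r j v) (A j) (B j)) :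
    ∀ n : ℕ,
      (alphaGB r B ((r + 1) * n)
          = (Delta r (Vsys r r v) (n + 1) * Delta r (Vsys r 0 v) n)
            / (Delta r (Vsys r r v) n * Delta r (Vsys r 0 v) (n + 1)) ∧
       alphaGB r B ((r + 1) * n)
          = DeltaT r (Vsys r 0 v) (n + 1) / Delta r (Vsys r 0 v) (n + 1)
            - DeltaT r (Vsys r r v) n / Delta r (Vsys r r v) n) ∧
      (∀ i, 1 ≤ i → i ≤ r →
        alphaGB r B ((r + 1) * n + i)
          = (Delta r (Vsys r (i - 1) v) (n + 2) * Delta r (Vsys r i v) n)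
            / (Delta r (Vsys r (i - 1) v) (n + 1) * Delta r (Vsys r i v) (n + 1)) ∧
        alphaGB r B ((r + 1) * n + i)
          = DeltaT r (Vsys r i v) (n + 1) / Delta r (Vsys r i v) (n + 1)
            - DeltaT r (Vsys r (i - 1) v) (n + 1) / Delta r (Vsys r (i - 1) v) (n + 1)) := by
  intro n
  have hr1 : (0:ℕ) ≤ r := by omega
  have prodD : ∀ j, j ≤ r → ∀ m, Delta r (Vsys r j v) m = ∏ k ∈ Finset.range m, B j k k :=
    fun j hj m => Stmt6Aux.delta_eq_prod (hGB j hj) m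
  have Dnz : ∀ j, j ≤ r → ∀ m, Delta r (Vsys r j v) m ≠ 0 := by
    intro j hj m
    rw [prodD j hj m]
    exact Finset.prod_ne_zero_iff.mpr (fun k _ => (hGB j hj).B_diag k)
  have hs : ∀ j (hj : j ≤ r) (m : ℕ),
      Delta r (Vsys r j v) (m+1) = Delta r (Vsys r j v) m * B j m m := by
    intro j hj m
    rw [prodD j hj, prodD j hj, Finset.prod_range_succ]
  have dtd : ∀ j (hj : j ≤ r) (m : ℕ), 1 ≤ m →
      DeltaT r (Vsys r j v) m / Delta r (Vsys r j v) m = A j m (m-1) := by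
    intro j hj m hm
    rw [Stmt6Aux.deltaT_eq (hGB j hj) m hm, prodD j hj, mul_div_assoc, div_self, mul_one]
    exact Finset.prod_ne_zero_iff.mpr (fun k _ => (hGB j hj).B_diag k)
  have Hrow : ∀ n ℓ, ∑ k ∈ Finset.range (n + 2), A 0 (n+1) k * B 0 k ℓ
      = ∑ k ∈ Finset.range (n + 1), A r n k * B r k ℓ := by
    intro n ℓ
    have h1 := (hGB 0 (by omega)).factor (n+1) ℓ
    have h2 := (hGB r le_rfl).factor n ℓ
    rw [Stmt6Aux.shift_row r hr v n ℓ] at h2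
    exact h1.symm.trans h2
  have keyrow := Stmt6Aux.row_shift_key (A 0) (B 0) (A r) (B r)
    (hGB 0 (by omega)).A_upper (hGB 0 (by omega)).A_diag
    (hGB 0 (by omega)).B_lower (hGB 0 (by omega)).B_diag
    (hGB r le_rfl).A_upper (hGB r le_rfl).A_diag
    (hGB r le_rfl).B_lower (hGB r le_rfl).B_diag Hrow
  have ha0 : alphaGB r B ((r+1)*n) = B r n n / B 0 n n := by
    unfold alphaGB
    rw [if_pos (Nat.mul_mod_right (r+1) n), Nat.mul_div_cancel_left _ (by omega : 0 < r+1)]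
  constructor
  · constructor
    · -- determinant ratio for alpha (r+1)n
      rw [ha0, div_eq_div_iff ((hGB 0 (by omega)).B_diag n)
        (mul_ne_zero (Dnz r le_rfl n) (Dnz 0 (by omega) (n+1)))]
      rw [hs r le_rfl n, hs 0 (by omega) n]
      ring
    · -- DeltaT formula for alpha (r+1)n
      rw [ha0, keyrow n, dtd 0 (by omega) (n+1) (by omega)]
      simp only [Nat.add_sub_cancel]
      rcases Nat.eq_zero_or_pos n with rfl | hn
      · rw [if_pos rfl]
        have : DeltaT r (Vsys r r v) 0 = 0 := by simp [DeltaT]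
        rw [this, zero_div]
      · rw [if_neg (by omega), dtd r le_rfl n (by omega)]
  · intro i hi1 hi2
    have Hcol : ∀ n ℓ, ∑ k ∈ Finset.range (n + 1), A i n k * B i k ℓ
        = ∑ k ∈ Finset.range (n + 1), A (i-1) n k * B (i-1) k (ℓ+1) := by
      intro n ℓ
      have h1 := (hGB i hi2).factor n ℓ
      have h2 := (hGB (i-1) (by omega)).factor n (ℓ+1)
      rw [Stmt6Aux.shift_col r hr v i hi1 hi2 n ℓ] at h1
      exact h1.symm.trans h2
    have keycol := Stmt6Aux.col_shift_key (A (i-1)) (B (i-1)) (A i) (B i)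
      (hGB (i-1) (by omega)).A_upper (hGB (i-1) (by omega)).A_diag
      (hGB (i-1) (by omega)).B_lower (hGB (i-1) (by omega)).B_diag
      (hGB i hi2).A_upper (hGB i hi2).A_diag
      (hGB i hi2).B_lower (hGB i hi2).B_diag Hcol
    have hai : alphaGB r B ((r+1)*n + i) = B (i-1) (n+1) (n+1) / B i n n := by
      unfold alphaGB
      have hmod : ((r+1)*n + i) % (r+1) = i := by
        rw [Nat.add_comm ((r+1)*n) i, Nat.add_mul_mod_self_left]
        exact Nat.mod_eq_of_lt (by omega)
      have hdiv : ((r+1)*n + i) / (r+1) = n := by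
        rw [Nat.add_comm ((r+1)*n) i, Nat.add_mul_div_left _ _ (by omega : 0 < r+1),
          Nat.div_eq_of_lt (by omega), zero_add]
      rw [hmod, hdiv, if_neg (by omega)]
    constructor
    · rw [hai, div_eq_div_iff ((hGB i hi2).B_diag n)
        (mul_ne_zero (Dnz (i-1) (by omega) (n+1)) (Dnz i hi2 (n+1)))]
      rw [show n+2 = (n+1)+1 from rfl, hs (i-1) (by omega) (n+1), hs i hi2 n]
      ring
    · rw [hai, keycol n, dtd i hi2 (n+1) (by omega), dtd (i-1) (by omega) (n+1) (by omega)]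
      simp only [Nat.add_sub_cancel]
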